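/- Let E be a stable bundle on C, Ψ₁, Ψ₂ ∈ H^0(C, End₀E ⊗ K^{1/2}), and α ∈ H^1(C, End₀E) a first-order deformation of E along which both Ψ₁ and Ψ₂ extend to first order (i.e. there exist Ȧ ∈ Ω^{0,1}(End₀E) representing α and Ψ̇_i with ∂̄Ψ̇_i + [Ȧ, Ψ_i] = 0). Then the Serre duality pairing of [Ψ₁, Ψ₂] ∈ H^0(C, End₀E ⊗ K) with α vanishes: ∫_C tr(Ȧ [Ψ₁, Ψ₂]) = 0. -/
import Mathlib

theorem bracket_annihilates_deformation
    (W Wb A : Type)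
    [AddCommGroup W] [Module ℂ W] [AddCommGroup Wb] [Module ℂ Wb]
    [AddCommGroup A] [Module ℂ A]
    (dbar : W →ₗ[ℂ] Wb)
    (b : A →ₗ[ℂ] W →ₗ[ℂ] Wb)
    (T : A →ₗ[ℂ] W →ₗ[ℂ] W →ₗ[ℂ] ℂ)
    (J : W →ₗ[ℂ] Wb →ₗ[ℂ] ℂ)
    (stokes : ∀ ψ φ : W, J ψ (dbar φ) + J φ (dbar ψ) = 0)
    (hJb : ∀ (a : A) (ψ φ : W), J ψ (b a φ) = T a φ ψ - T a ψ φ)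
    (Adot : A) (Ψ₁ Ψ₂ Ψd₁ Ψd₂ : W)
    (hol₁ : dbar Ψ₁ = 0) (hol₂ : dbar Ψ₂ = 0)
    (hdef₁ : dbar Ψd₁ + b Adot Ψ₁ = 0)
    (hdef₂ : dbar Ψd₂ + b Adot Ψ₂ = 0) :
    T Adot Ψ₁ Ψ₂ - T Adot Ψ₂ Ψ₁ = 0 := by
  have h1 : b Adot Ψ₁ = - dbar Ψd₁ := eq_neg_of_add_eq_zero_right hdef₁
  have hst := stokes Ψ₂ Ψd₁
  rw [hol₂, map_zero] at hst
  have hz : J Ψ₂ (dbar Ψd₁) = 0 := by simpa using hst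
  have := hJb Adot Ψ₂ Ψ₁
  rw [h1, map_neg, hz] at this
  linear_combination -this
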